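/- For all natural numbers n, S_n · (S_n + S_{n+1}) = Σ_{i=0}^{2n+1} S_i, in ℤ[x]. -/

import Mathlib

/-- Chebyshev polynomials of the second kind in ℤ[x]. -/
noncomputable def chebS : ℕ → Polynomial ℤ
  | 0 => 1
  | 1 => Polynomial.X
  | (n+2) => Polynomial.X * chebS (n+1) - chebS n

lemma chebS_prod (m : ℕ) : ∀ n, chebS (m+1) * chebS (n+1) - chebS m * chebS n = chebS (m+n+2) := by
  intro n
  induction n using Nat.twoStepInduction generalizing m with
  | zero =>
      show chebS (m+1) * chebS 1 - chebS m * chebS 0 = chebS (m+2)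
      have h2 : chebS (m+2) = Polynomial.X * chebS (m+1) - chebS m := rfl
      have hS1 : chebS 1 = Polynomial.X := rfl
      have hS0 : chebS 0 = 1 := rfl
      rw [hS1, hS0, h2]; ring
  | one =>
      show chebS (m+1) * chebS 2 - chebS m * chebS 1 = chebS (m+3)
      have h2 : chebS (m+2) = Polynomial.X * chebS (m+1) - chebS m := rfl
      have h3 : chebS (m+3) = Polynomial.X * chebS (m+2) - chebS (m+1) := rfl
      have hS2 : chebS 2 = Polynomial.X * Polynomial.X - 1 := rfl
      have hS1 : chebS 1 = Polynomial.X := rfl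
      rw [hS2, hS1, h3, h2]; ring
  | more n ih1 ih2 =>
      have e1 : chebS (n+3) = Polynomial.X * chebS (n+2) - chebS (n+1) := rfl
      have e2 : chebS (n+2) = Polynomial.X * chebS (n+1) - chebS n := rfl
      have e3 : chebS (m+n+4) = Polynomial.X * chebS (m+n+3) - chebS (m+n+2) := rfl
      have i1 := ih1 m
      have i2 := ih2 m
      show chebS (m+1) * chebS (n+3) - chebS m * chebS (n+2) = chebS (m+(n+2)+2)
      have hn : m+(n+2)+2 = m+n+4 := by omega
      have hn2 : m+(n+1)+2 = m+n+3 := by omega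
      rw [hn2, show n+1+1 = n+2 from rfl] at i2
      rw [e2] at i2
      rw [hn, e1, e2, e3, ← i2, ← i1]
      ring

theorem chebS_mul_add_succ (n : ℕ) :
    chebS n * (chebS n + chebS (n + 1)) = ∑ i ∈ Finset.range (2 * n + 2), chebS i := by
  induction n with
  | zero =>
      have : chebS 1 = Polynomial.X := rfl
      simp [Finset.sum_range_succ, chebS]
  | succ n ih =>
      have hs : 2 * (n+1) + 2 = (2*n+2) + 1 + 1 := by omega
      rw [hs, Finset.sum_range_succ, Finset.sum_range_succ, ← ih]
      have p1 := chebS_prod n n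
      have p2 := chebS_prod (n+1) n
      have h1 : n + n + 2 = 2*n+2 := by omega
      have h2 : n + 1 + n + 2 = 2*n+2+1 := by omega
      rw [h1] at p1
      rw [h2] at p2
      have h3 : n + 1 + 1 = n + 2 := rfl
      rw [h3, ← p1, ← p2]
      ring
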